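/- Let $v_0, \ldots, v_{k-1}$ be the vertices of a cycle, and let $\pi$ be any permutation (priority assignment) on them. Suppose each vertex $u$ traverses the cycle in the same fixed direction until it reaches the first vertex $w$ with $\pi(w) < \pi(u)$, and is assigned label $w$ (the vertex of minimum $\pi$-value traverses the whole cycle and labels itself). Then iterating the labeling map (following labels) from any vertex reaches the unique vertex of minimum $\pi$-value on the cycle; in particular, two vertices lie on the same cycle if and only if iterating labels from each reaches the same minimum-priority representative. -/
import Mathlib


/-- The label of `u`: traverse the cycle structure (permutation `σ`) in the
fixed direction from `u` until reaching the first vertex of smaller priority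
`π`; the minimum-priority vertex of its cycle traverses the whole cycle and
labels itself. -/
noncomputable def cycleLabel {V : Type*} (σ : Equiv.Perm V) (π : V → ℕ) (u : V) : V :=
  letI := Classical.dec
  if _h : {j : ℕ | 1 ≤ j ∧ π ((σ ^ j) u) < π u}.Nonempty
  then (σ ^ sInf {j : ℕ | 1 ≤ j ∧ π ((σ ^ j) u) < π u}) u
  else u

lemma sameCycle_cycleLabel {V : Type*} (σ : Equiv.Perm V) (π : V → ℕ) (u : V) :
    σ.SameCycle u (cycleLabel σ π u) := by
  unfold cycleLabel
  split
  · exact ⟨((sInf {j : ℕ | 1 ≤ j ∧ π ((σ ^ j) u) < π u} : ℕ) : ℤ), by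
      rw [zpow_natCast]⟩
  · exact Equiv.Perm.SameCycle.refl _ _

lemma cycleLabel_lt {V : Type*} [Fintype V] (σ : Equiv.Perm V) (π : V → ℕ) (u w : V)
    (hw : σ.SameCycle u w) (hlt : π w < π u) : π (cycleLabel σ π u) < π u := by
  obtain ⟨i, hi0, _, hie⟩ := hw.exists_pow_eq''
  have hne : {j : ℕ | 1 ≤ j ∧ π ((σ ^ j) u) < π u}.Nonempty :=
    ⟨i, hi0, by rw [hie]; exact hlt⟩
  have hmem := Nat.sInf_mem hne
  unfold cycleLabel
  rw [dif_pos hne]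
  exact hmem.2

lemma cycleLabel_min {V : Type*} (σ : Equiv.Perm V) (π : V → ℕ) (u : V)
    (hmin : ∀ w, σ.SameCycle u w → π u ≤ π w) : cycleLabel σ π u = u := by
  unfold cycleLabel
  rw [dif_neg]
  rintro ⟨j, _, hj⟩
  exact absurd (hmin _ ⟨(j : ℤ), by rw [zpow_natCast]⟩) (not_le.mpr hj)

lemma cycleLabel_reaches {V : Type*} [Fintype V] (σ : Equiv.Perm V) (π : V → ℕ) :
    ∀ u : V, ∃ m : ℕ, σ.SameCycle u ((cycleLabel σ π)^[m] u) ∧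
      ∀ w : V, σ.SameCycle u w → π ((cycleLabel σ π)^[m] u) ≤ π w := by
  suffices H : ∀ n (u : V), π u = n → ∃ m : ℕ, σ.SameCycle u ((cycleLabel σ π)^[m] u) ∧
      ∀ w : V, σ.SameCycle u w → π ((cycleLabel σ π)^[m] u) ≤ π w from
    fun u => H (π u) u rfl
  intro n
  induction n using Nat.strong_induction_on with
  | _ n ih =>
  intro u hn
  subst hn
  by_cases hmin : ∀ w, σ.SameCycle u w → π u ≤ π w
  · exact ⟨0, Equiv.Perm.SameCycle.refl _ _, hmin⟩
  · push_neg at hmin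
    obtain ⟨w, hw, hlt⟩ := hmin
    have hdec := cycleLabel_lt σ π u w hw hlt
    obtain ⟨m, hm1, hm2⟩ := ih _ hdec (cycleLabel σ π u) rfl
    have hsc : σ.SameCycle u (cycleLabel σ π u) := sameCycle_cycleLabel σ π u
    refine ⟨m + 1, ?_, ?_⟩
    · rw [Function.iterate_succ_apply]
      exact hsc.trans hm1
    · intro x hx
      rw [Function.iterate_succ_apply]
      exact hm2 x ((hsc.symm).trans hx)

lemma sameCycle_iterate {V : Type*} (σ : Equiv.Perm V) (π : V → ℕ) (u : V) (m : ℕ) :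
    σ.SameCycle u ((cycleLabel σ π)^[m] u) := by
  induction m with
  | zero => exact Equiv.Perm.SameCycle.refl _ _
  | succ m ih =>
    rw [Function.iterate_succ_apply']
    exact ih.trans (sameCycle_cycleLabel σ π _)

/-- Correctness of the cycle-connectivity labeling step: iterating the
labeling map from any vertex reaches the unique minimum-priority vertex of its
cycle; in particular two vertices lie on the same cycle iff iterating labels
from each reaches the same fixed representative. -/
theorem cycleLabel_correct {V : Type*} [Fintype V]
    (σ : Equiv.Perm V) (π : V → ℕ) (hπ : Function.Injective π) :
    (∀ u : V, ∃ m : ℕ,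
      σ.SameCycle u ((cycleLabel σ π)^[m] u) ∧
      ∀ w : V, σ.SameCycle u w → π ((cycleLabel σ π)^[m] u) ≤ π w) ∧
    (∀ u v : V, σ.SameCycle u v ↔
      ∃ (r : V) (m₁ m₂ : ℕ), (cycleLabel σ π)^[m₁] u = r ∧
        (cycleLabel σ π)^[m₂] v = r ∧ cycleLabel σ π r = r) := by
  refine ⟨cycleLabel_reaches σ π, fun u v => ⟨?_, ?_⟩⟩
  · intro huv
    obtain ⟨m₁, hs₁, hmin₁⟩ := cycleLabel_reaches σ π u
    obtain ⟨m₂, hs₂, hmin₂⟩ := cycleLabel_reaches σ π v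
    set r₁ := (cycleLabel σ π)^[m₁] u
    set r₂ := (cycleLabel σ π)^[m₂] v
    have heq : r₁ = r₂ := by
      apply hπ
      exact le_antisymm (hmin₁ _ (huv.trans hs₂)) (hmin₂ _ (huv.symm.trans hs₁))
    refine ⟨r₁, m₁, m₂, rfl, heq.symm, ?_⟩
    apply cycleLabel_min
    intro w hw
    exact hmin₁ w (hs₁.trans hw)
  · rintro ⟨r, m₁, m₂, h₁, h₂, -⟩
    have := sameCycle_iterate σ π u m₁
    rw [h₁] at this
    have h2 := sameCycle_iterate σ π v m₂
    rw [h₂] at h2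
    exact this.trans h2.symm
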